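/- Let n, T ≥ 1, let 0 < ε ≤ 0.29, and let ψ₁, …, ψ_T ∈ ℂ^{2ⁿ} be unit vectors. Then (1/(2(4ⁿ − 1))) · ∑_{σ ∈ {+1,−1}} ∑_{s ≠ 0} ∏_{t=1}^{T} (1 + 3ε·σ·ψ_tᴴ P_s ψ_t) ≥ 1 − 9Tε²/(2ⁿ + 1), where the inner sum ranges over all n-qubit Pauli strings P_s with s not identically 0. -/

import Mathlib

open Matrix Finset

/-- The four single-qubit Pauli matrices `I, X, Y, Z`. -/
noncomputable def pauli : Fin 4 → Matrix (Fin 2) (Fin 2) ℂ :=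
  ![1, !![0, 1; 1, 0], !![0, -Complex.I; Complex.I, 0], !![1, 0; 0, -1]]

/-- The `n`-qubit Pauli string `σ_{s 1} ⊗ ⋯ ⊗ σ_{s n}`, as a matrix indexed by
functions `Fin n → Fin 2`. -/
noncomputable def pauliString (n : ℕ) (s : Fin n → Fin 4) :
    Matrix (Fin n → Fin 2) (Fin n → Fin 2) ℂ :=
  Matrix.of fun i j => ∏ t, pauli (s t) (i t) (j t)

/-- The (real part of the) quadratic form `ψᴴ A ψ`; for Hermitian `A` this is the
real number `ψᴴ A ψ`. -/
noncomputable def qform {ι : Type*} [Fintype ι] (A : Matrix ι ι ℂ) (ψ : ι → ℂ) : ℝ :=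
  (∑ i, ∑ j, (starRingEnd ℂ) (ψ i) * A i j * ψ j).re

lemma pauli_conj (a : Fin 4) (i j : Fin 2) :
    (starRingEnd ℂ) (pauli a i j) = pauli a j i := by
  fin_cases a <;> fin_cases i <;> fin_cases j <;>
    simp [pauli, Matrix.one_apply] <;> norm_num

lemma pauli_sq (a : Fin 4) (i k : Fin 2) :
    ∑ j, pauli a i j * pauli a j k = if i = k then 1 else 0 := by
  fin_cases a <;> fin_cases i <;> fin_cases k <;>
    simp [pauli, Fin.sum_univ_two, Matrix.one_apply] <;> ring_nf <;> simp [Complex.ext_iff]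

lemma pauli_ortho (i j l k : Fin 2) :
    ∑ a : Fin 4, pauli a i j * pauli a l k =
      if i = k ∧ j = l then 2 else 0 := by
  fin_cases i <;> fin_cases j <;> fin_cases l <;> fin_cases k <;>
    simp [pauli, Fin.sum_univ_four, Matrix.one_apply] <;> ring_nf <;> simp [Complex.ext_iff]

lemma string_conj (n : ℕ) (s : Fin n → Fin 4) (i j : Fin n → Fin 2) :
    (starRingEnd ℂ) (pauliString n s i j) = pauliString n s j i := by
  simp only [pauliString, of_apply, map_prod, pauli_conj]

lemma string_sq (n : ℕ) (s : Fin n → Fin 4) (i k : Fin n → Fin 2) :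
    ∑ j : Fin n → Fin 2, pauliString n s i j * pauliString n s j k =
      if i = k then 1 else 0 := by
  simp only [pauliString, of_apply, ← Finset.prod_mul_distrib]
  rw [← Fintype.prod_sum (fun (t : Fin n) (b : Fin 2) =>
    pauli (s t) (i t) b * pauli (s t) b (k t))]
  simp only [pauli_sq]
  rw [Finset.prod_boole]
  simp [funext_iff]

lemma string_ortho (n : ℕ) (i j l k : Fin n → Fin 2) :
    ∑ s : Fin n → Fin 4, pauliString n s i j * pauliString n s l k =
      if i = k ∧ j = l then 2 ^ n else 0 := by
  simp only [pauliString, of_apply, ← Finset.prod_mul_distrib]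
  rw [← Fintype.prod_sum (fun (t : Fin n) (a : Fin 4) =>
    pauli a (i t) (j t) * pauli a (l t) (k t))]
  simp only [pauli_ortho]
  have : ∀ t : Fin n, (if i t = k t ∧ j t = l t then (2:ℂ) else 0) =
      (if i t = k t ∧ j t = l t then (1:ℂ) else 0) * 2 := by
    intro t; split <;> ring
  simp only [this, Finset.prod_mul_distrib, Finset.prod_boole, Finset.prod_const,
    Finset.card_univ, Fintype.card_fin]
  by_cases h : i = k ∧ j = l
  · simp [h.1, h.2, funext_iff, mul_comm]
  · rw [if_neg, if_neg h]
    · simp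
    · simp only [funext_iff, not_and_or] at h ⊢
      push_neg
      rcases h with h | h <;> obtain ⟨t, ht⟩ := not_forall.mp h
      · exact ⟨t, mem_univ t, fun h' => (ht h').elim⟩
      · exact ⟨t, mem_univ t, fun _ => ht⟩

section QC
variable (n : ℕ) (ψ : (Fin n → Fin 2) → ℂ)

noncomputable def qc (s : Fin n → Fin 4) : ℂ :=
  ∑ i, ∑ j, (starRingEnd ℂ) (ψ i) * pauliString n s i j * ψ j

lemma qc_conj (s : Fin n → Fin 4) : (starRingEnd ℂ) (qc n ψ s) = qc n ψ s := by
  unfold qc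
  simp only [map_sum, _root_.map_mul, Complex.conj_conj, string_conj]
  rw [Finset.sum_comm]
  exact Finset.sum_congr rfl fun i _ => Finset.sum_congr rfl fun j _ => by ring

variable (h1 : ∑ i, Complex.normSq (ψ i) = 1)
include h1

variable (h1 : ∑ i, Complex.normSq (ψ i) = 1)
include h1

lemma psi_sum_one : ∑ i, (starRingEnd ℂ) (ψ i) * ψ i = 1 := by
  have := congrArg (Complex.ofReal) h1
  push_cast at this
  simpa [Complex.normSq_eq_conj_mul_self] using this

lemma psi_sum_one' : ∑ i, ψ i * (starRingEnd ℂ) (ψ i) = 1 := by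
  rw [← psi_sum_one n ψ h1]
  exact Finset.sum_congr rfl fun i _ => by ring

lemma qc_sum_sq : ∑ s : Fin n → Fin 4, qc n ψ s * (starRingEnd ℂ) (qc n ψ s) = 2 ^ n := by
  have hc : ∀ s, (starRingEnd ℂ) (qc n ψ s) =
      ∑ k, ∑ l, ψ k * pauliString n s l k * (starRingEnd ℂ) (ψ l) := by
    intro s; unfold qc
    simp only [map_sum, _root_.map_mul, Complex.conj_conj, string_conj]
  calc ∑ s : Fin n → Fin 4, qc n ψ s * (starRingEnd ℂ) (qc n ψ s)
      = ∑ s : Fin n → Fin 4, ∑ i, ∑ j, ∑ k, ∑ l,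
          ((starRingEnd ℂ) (ψ i) * ψ j * ψ k * (starRingEnd ℂ) (ψ l)) *
            (pauliString n s i j * pauliString n s l k) := by
        refine Finset.sum_congr rfl fun s _ => ?_
        rw [hc s]; unfold qc
        rw [Finset.sum_mul]
        refine Finset.sum_congr rfl fun i _ => ?_
        rw [Finset.sum_mul]
        refine Finset.sum_congr rfl fun j _ => ?_
        rw [Finset.mul_sum]
        refine Finset.sum_congr rfl fun k _ => ?_
        rw [Finset.mul_sum]
        exact Finset.sum_congr rfl fun l _ => by ring
    _ = ∑ i, ∑ j, ∑ k, ∑ l,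
          ((starRingEnd ℂ) (ψ i) * ψ j * ψ k * (starRingEnd ℂ) (ψ l)) *
            ∑ s : Fin n → Fin 4, pauliString n s i j * pauliString n s l k := by
        rw [Finset.sum_comm]
        refine Finset.sum_congr rfl fun i _ => ?_
        rw [Finset.sum_comm]
        refine Finset.sum_congr rfl fun j _ => ?_
        rw [Finset.sum_comm]
        refine Finset.sum_congr rfl fun k _ => ?_
        rw [Finset.sum_comm]
        exact Finset.sum_congr rfl fun l _ => (Finset.mul_sum _ _ _).symm
    _ = ∑ i, ∑ j, ((starRingEnd ℂ) (ψ i) * ψ i) * (ψ j * (starRingEnd ℂ) (ψ j)) * 2 ^ n := by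
        have hcond : ∀ (i j k l : Fin n → Fin 2),
            (if i = k ∧ j = l then (2:ℂ) ^ n else 0) =
              if j = l then (if i = k then 2 ^ n else 0) else 0 := by
          intro i j k l
          by_cases h : j = l <;> by_cases h2 : i = k <;> simp [h, h2]
        simp only [string_ortho, hcond, mul_ite, mul_zero, Finset.sum_ite_eq,
          Finset.sum_ite_eq', mem_univ, if_true]
        exact Finset.sum_congr rfl fun i _ => Finset.sum_congr rfl fun j _ => by ring
    _ = 2 ^ n := by
        have hB := psi_sum_one' n ψ h1
        calc ∑ i, ∑ j, ((starRingEnd ℂ) (ψ i) * ψ i) * (ψ j * (starRingEnd ℂ) (ψ j)) * 2 ^ n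
            = ∑ i, ((starRingEnd ℂ) (ψ i) * ψ i) * ((∑ j, ψ j * (starRingEnd ℂ) (ψ j)) * 2 ^ n) := by
              refine Finset.sum_congr rfl fun i _ => ?_
              rw [Finset.sum_mul, Finset.mul_sum]
              exact Finset.sum_congr rfl fun j _ => by ring
          _ = 2 ^ n := by
              rw [hB, one_mul, ← Finset.sum_mul, psi_sum_one n ψ h1, one_mul]

lemma mulvec_norm (s : Fin n → Fin 4) :
    ∑ i, Complex.normSq (∑ j, pauliString n s i j * ψ j) = 1 := by
  have key : (↑(∑ i, Complex.normSq (∑ j, pauliString n s i j * ψ j)) : ℂ) = 1 := by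
    push_cast
    simp only [← Complex.mul_conj]
    calc ∑ i, (∑ j, pauliString n s i j * ψ j) *
            (starRingEnd ℂ) (∑ j, pauliString n s i j * ψ j)
        = ∑ i, ∑ j, ∑ k, (ψ j * (starRingEnd ℂ) (ψ k)) *
            (pauliString n s k i * pauliString n s i j) := by
          refine Finset.sum_congr rfl fun i _ => ?_
          simp only [map_sum, _root_.map_mul, string_conj]
          rw [Finset.sum_mul]
          refine Finset.sum_congr rfl fun j _ => ?_
          rw [Finset.mul_sum]
          exact Finset.sum_congr rfl fun k _ => by ring
      _ = ∑ j, ∑ k, (ψ j * (starRingEnd ℂ) (ψ k)) *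
            ∑ i, pauliString n s k i * pauliString n s i j := by
          rw [Finset.sum_comm]
          refine Finset.sum_congr rfl fun j _ => ?_
          rw [Finset.sum_comm]
          exact Finset.sum_congr rfl fun k _ => (Finset.mul_sum _ _ _).symm
      _ = 1 := by
          simp only [string_sq, mul_ite, mul_one, mul_zero]
          simp only [Finset.sum_ite_eq, Finset.sum_ite_eq', mem_univ, if_true]
          exact psi_sum_one' n ψ h1
  exact_mod_cast key
end QC

section R
variable (n : ℕ) (ψ : (Fin n → Fin 2) → ℂ)

lemma qform_eq (s : Fin n → Fin 4) : qform (pauliString n s) ψ = (qc n ψ s).re := rfl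

lemma qc_real (s : Fin n → Fin 4) : qc n ψ s = ((qform (pauliString n s) ψ : ℝ) : ℂ) := by
  rw [qform_eq]
  exact ((Complex.conj_eq_iff_re).mp (qc_conj n ψ s)).symm

variable (h1 : ∑ i, Complex.normSq (ψ i) = 1)
include h1

variable (h1 : ∑ i, Complex.normSq (ψ i) = 1)
include h1

lemma qform_sum_sq : ∑ s : Fin n → Fin 4, (qform (pauliString n s) ψ) ^ 2 = 2 ^ n := by
  have := qc_sum_sq n ψ h1
  have h2 : ∀ s, qc n ψ s * (starRingEnd ℂ) (qc n ψ s) =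
      (((qform (pauliString n s) ψ) ^ 2 : ℝ) : ℂ) := by
    intro s
    rw [qc_real n ψ s]
    push_cast
    simp [Complex.conj_ofReal]
    ring
  rw [Finset.sum_congr rfl fun s _ => h2 s] at this
  exact_mod_cast this

lemma qform_abs_le (s : Fin n → Fin 4) : |qform (pauliString n s) ψ| ≤ 1 := by
  have habs : ‖qc n ψ s‖ ≤ 1 := by
    have hqc : qc n ψ s = ∑ i, (starRingEnd ℂ) (ψ i) * ∑ j, pauliString n s i j * ψ j := by
      unfold qc
      exact Finset.sum_congr rfl fun i _ => by
        rw [Finset.mul_sum]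
        exact Finset.sum_congr rfl fun j _ => by ring
    set φ : (Fin n → Fin 2) → ℂ := fun i => ∑ j, pauliString n s i j * ψ j with hφ
    have h2 : ‖qc n ψ s‖ ≤ ∑ i, ‖ψ i‖ * ‖φ i‖ := by
      rw [hqc]
      refine (norm_sum_le _ _).trans (le_of_eq (Finset.sum_congr rfl fun i _ => ?_))
      rw [norm_mul, Complex.norm_conj]
    have h3 : (∑ i, ‖ψ i‖ * ‖φ i‖) ^ 2 ≤
        (∑ i, ‖ψ i‖ ^ 2) * (∑ i, ‖φ i‖ ^ 2) :=
      Finset.sum_mul_sq_le_sq_mul_sq _ _ _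
    have h4 : ∑ i, ‖ψ i‖ ^ 2 = 1 := by
      simp_rw [Complex.sq_norm]; exact h1
    have h5 : ∑ i, ‖φ i‖ ^ 2 = 1 := by
      simp_rw [Complex.sq_norm]; exact mulvec_norm n ψ h1 s
    have h6 : 0 ≤ ∑ i, ‖ψ i‖ * ‖φ i‖ :=
      Finset.sum_nonneg fun i _ => mul_nonneg (norm_nonneg _) (norm_nonneg _)
    rw [h4, h5, one_mul] at h3
    nlinarith [norm_nonneg (qc n ψ s)]
  calc |qform (pauliString n s) ψ| = |(qc n ψ s).re| := by rw [qform_eq]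
    _ ≤ ‖qc n ψ s‖ := Complex.abs_re_le_norm _
    _ ≤ 1 := habs

lemma qform_zero : qform (pauliString n 0) ψ = 1 := by
  have hP : ∀ i j : Fin n → Fin 2, pauliString n 0 i j = if i = j then 1 else 0 := by
    intro i j
    simp only [pauliString, of_apply]
    have : ∀ t : Fin n, pauli ((0 : Fin n → Fin 4) t) (i t) (j t) =
        if i t = j t then 1 else 0 := by
      intro t
      show pauli 0 (i t) (j t) = _
      simp [pauli, Matrix.one_apply]
    simp only [this, Finset.prod_boole]
    simp [funext_iff]
  have : qc n ψ 0 = 1 := by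
    unfold qc
    simp only [hP, mul_ite, ite_mul, mul_one, mul_zero, zero_mul, one_mul]
    simp only [Finset.sum_ite_eq, Finset.sum_ite_eq', mem_univ, if_true]
    exact psi_sum_one n ψ h1
  rw [qform_eq, this]
  simp
end R

lemma weierstrass (T : ℕ) (b : ℕ → ℝ) (hb : ∀ t < T, 0 ≤ b t ∧ b t ≤ 1) :
    1 - ∑ t ∈ Finset.range T, b t ≤ ∏ t ∈ Finset.range T, (1 - b t) := by
  induction T with
  | zero => simp
  | succ T ih =>
    rw [Finset.prod_range_succ, Finset.sum_range_succ]
    have h := hb T (Nat.lt_succ_self T)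
    have hi := ih fun t ht => hb t (ht.trans (Nat.lt_succ_self T))
    have hsum : 0 ≤ ∑ t ∈ Finset.range T, b t :=
      Finset.sum_nonneg fun t ht => (hb t ((Finset.mem_range.mp ht).trans (Nat.lt_succ_self T))).1
    nlinarith [mul_le_mul_of_nonneg_right hi (by linarith : (0:ℝ) ≤ 1 - b T)]

lemma key_ineq (T : ℕ) (a : ℕ → ℝ) (ha : ∀ t < T, |a t| ≤ 1) :
    2 - 2 * ∑ t ∈ Finset.range T, a t ^ 2 ≤
      (∏ t ∈ Finset.range T, (1 + a t)) + ∏ t ∈ Finset.range T, (1 - a t) := by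
  have hfac : ∀ t < T, -1 ≤ a t ∧ a t ≤ 1 := fun t ht => abs_le.mp (ha t ht)
  set A := ∏ t ∈ Finset.range T, (1 + a t) with hA'
  set B := ∏ t ∈ Finset.range T, (1 - a t) with hB'
  have hA : 0 ≤ A := Finset.prod_nonneg fun t ht => by
    have := hfac t (Finset.mem_range.mp ht); linarith [this.1]
  have hB : 0 ≤ B := Finset.prod_nonneg fun t ht => by
    have := hfac t (Finset.mem_range.mp ht); linarith [this.2]
  have hAB : A * B = ∏ t ∈ Finset.range T, (1 - a t ^ 2) := by
    rw [hA', hB', ← Finset.prod_mul_distrib]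
    exact Finset.prod_congr rfl fun t _ => by ring
  have hle1 : A * B ≤ 1 := by
    rw [hAB]
    refine Finset.prod_le_one (fun t ht => ?_) (fun t ht => ?_) <;>
      · have := hfac t (Finset.mem_range.mp ht); nlinarith [this.1, this.2]
  have hge : 1 - ∑ t ∈ Finset.range T, a t ^ 2 ≤ A * B := by
    rw [hAB]
    refine weierstrass T (fun t => a t ^ 2) fun t ht => ⟨sq_nonneg _, ?_⟩
    show a t ^ 2 ≤ 1
    have := hfac t ht; nlinarith [this.1, this.2]
  have hABnn : 0 ≤ A * B := mul_nonneg hA hB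
  have hsqrt : A * B ≤ Real.sqrt (A * B) := by
    nlinarith [Real.sq_sqrt hABnn, Real.sqrt_nonneg (A * B)]
  have hamgm : 2 * Real.sqrt (A * B) ≤ A + B := by
    rw [Real.sqrt_mul hA]
    nlinarith [sq_nonneg (Real.sqrt A - Real.sqrt B), Real.sq_sqrt hA, Real.sq_sqrt hB]
  linarith

/-- Likelihood-ratio bound underlying the `Ω(2ⁿ/ε²)` shadow tomography
lower bound with Pauli observables: summing over both signs `σ ∈ {+1, −1}` (the two
products below) and over all non-identity Pauli strings `s ≠ 0`,
`(1/(2(4ⁿ−1))) ∑_{σ,s} ∏_{t<T} (1 + 3εσ·ψ_tᴴ P_s ψ_t) ≥ 1 − 9Tε²/(2ⁿ+1)`. -/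
theorem pauli_shadow_tomography_likelihood_ratio_bound
    (n T : ℕ) (hn : 1 ≤ n) (hT : 1 ≤ T)
    (ε : ℝ) (hε0 : 0 < ε) (hε : ε ≤ 0.29)
    (ψ : ℕ → (Fin n → Fin 2) → ℂ)
    (hψ : ∀ t < T, ∑ i, Complex.normSq (ψ t i) = 1) :
    1 - 9 * T * ε ^ 2 / (2 ^ n + 1) ≤
      (1 / (2 * (4 ^ n - 1)) : ℝ) *
        ∑ s ∈ Finset.univ.filter (fun s : Fin n → Fin 4 => s ≠ 0),
          ((∏ t ∈ Finset.range T, (1 + 3 * ε * qform (pauliString n s) (ψ t))) +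
            (∏ t ∈ Finset.range T, (1 + 3 * ε * (-1) * qform (pauliString n s) (ψ t)))) := by
  set N : ℝ := (2 : ℝ) ^ n with hN'
  have hN : (2 : ℝ) ≤ N := by
    rw [hN']
    calc (2:ℝ) = 2 ^ 1 := (pow_one 2).symm
    _ ≤ 2 ^ n := pow_le_pow_right₀ one_le_two hn
  have h4 : ((4 : ℝ) ^ n) = N ^ 2 := by
    rw [hN', show (4:ℝ) = 2 ^ 2 by norm_num, ← pow_mul, mul_comm, pow_mul]
  have hfilter : Finset.univ.filter (fun s : Fin n → Fin 4 => s ≠ 0) =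
      Finset.univ.erase 0 := Finset.filter_ne' _ _
  have hcard : ((Finset.univ.filter (fun s : Fin n → Fin 4 => s ≠ 0)).card : ℝ) =
      N ^ 2 - 1 := by
    rw [hfilter, Finset.card_erase_of_mem (mem_univ 0), Finset.card_univ]
    have hcf : Fintype.card (Fin n → Fin 4) = 4 ^ n := by
      simp [Fintype.card_fun]
    rw [hcf]
    have h1 : (1:ℕ) ≤ 4 ^ n := Nat.one_le_pow _ _ (by norm_num)
    push_cast [h1]
    rw [← h4]
  have hsq : ∀ t < T, ∑ s ∈ Finset.univ.filter (fun s : Fin n → Fin 4 => s ≠ 0),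
      (qform (pauliString n s) (ψ t)) ^ 2 = N - 1 := by
    intro t ht
    rw [hfilter, Finset.sum_erase_eq_sub (mem_univ 0),
      qform_sum_sq n (ψ t) (hψ t ht), qform_zero n (ψ t) (hψ t ht), hN']
    norm_num
  have hpoint : ∀ s : Fin n → Fin 4,
      2 - 18 * ε ^ 2 * ∑ t ∈ Finset.range T, (qform (pauliString n s) (ψ t)) ^ 2 ≤
      (∏ t ∈ Finset.range T, (1 + 3 * ε * qform (pauliString n s) (ψ t))) +
        ∏ t ∈ Finset.range T, (1 + 3 * ε * (-1) * qform (pauliString n s) (ψ t)) := by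
    intro s
    have ha : ∀ t < T, |3 * ε * qform (pauliString n s) (ψ t)| ≤ 1 := by
      intro t ht
      have h1 := qform_abs_le n (ψ t) (hψ t ht) s
      rw [abs_mul]
      calc |3 * ε| * |qform (pauliString n s) (ψ t)| ≤ |3 * ε| * 1 :=
            mul_le_mul_of_nonneg_left h1 (abs_nonneg _)
        _ ≤ 1 := by
            rw [mul_one, abs_of_pos (by linarith : (0:ℝ) < 3 * ε)]
            linarith
    have hk := key_ineq T (fun t => 3 * ε * qform (pauliString n s) (ψ t)) ha
    have heq : ∀ t ∈ Finset.range T,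
        (1 + 3 * ε * (-1) * qform (pauliString n s) (ψ t)) =
          1 - 3 * ε * qform (pauliString n s) (ψ t) := fun t _ => by ring
    rw [Finset.prod_congr rfl heq]
    have hsum2 : ∑ t ∈ Finset.range T, (3 * ε * qform (pauliString n s) (ψ t)) ^ 2
        = 9 * ε ^ 2 * ∑ t ∈ Finset.range T, (qform (pauliString n s) (ψ t)) ^ 2 := by
      rw [Finset.mul_sum]
      exact Finset.sum_congr rfl fun t _ => by ring
    calc 2 - 18 * ε ^ 2 * ∑ t ∈ Finset.range T, (qform (pauliString n s) (ψ t)) ^ 2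
        = 2 - 2 * ∑ t ∈ Finset.range T, (3 * ε * qform (pauliString n s) (ψ t)) ^ 2 := by
          rw [hsum2]; ring
      _ ≤ _ := hk
  have hdouble : ∑ s ∈ Finset.univ.filter (fun s : Fin n → Fin 4 => s ≠ 0),
      ∑ t ∈ Finset.range T, (qform (pauliString n s) (ψ t)) ^ 2 = T * (N - 1) := by
    rw [Finset.sum_comm]
    rw [Finset.sum_congr rfl fun t ht => hsq t (Finset.mem_range.mp ht)]
    rw [Finset.sum_const, Finset.card_range, nsmul_eq_mul]
  have hS : 2 * (N ^ 2 - 1) - 18 * ε ^ 2 * (T * (N - 1)) ≤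
      ∑ s ∈ Finset.univ.filter (fun s : Fin n → Fin 4 => s ≠ 0),
        ((∏ t ∈ Finset.range T, (1 + 3 * ε * qform (pauliString n s) (ψ t))) +
          (∏ t ∈ Finset.range T, (1 + 3 * ε * (-1) * qform (pauliString n s) (ψ t)))) := by
    calc 2 * (N ^ 2 - 1) - 18 * ε ^ 2 * (T * (N - 1))
        = ∑ s ∈ Finset.univ.filter (fun s : Fin n → Fin 4 => s ≠ 0),
            (2 - 18 * ε ^ 2 * ∑ t ∈ Finset.range T, (qform (pauliString n s) (ψ t)) ^ 2) := by
          rw [Finset.sum_sub_distrib, Finset.sum_const, nsmul_eq_mul, hcard,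
            ← Finset.mul_sum, hdouble]
          ring
      _ ≤ _ := Finset.sum_le_sum fun s _ => hpoint s
  rw [h4]
  have hd1 : (0:ℝ) < N + 1 := by linarith
  have hd2 : (0:ℝ) < N ^ 2 - 1 := by nlinarith
  have key : 1 - 9 * T * ε ^ 2 / (N + 1) =
      1 / (2 * (N ^ 2 - 1)) * (2 * (N ^ 2 - 1) - 18 * ε ^ 2 * (T * (N - 1))) := by
    field_simp
    ring
  rw [key]
  exact mul_le_mul_of_nonneg_left hS (by positivity)
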